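/- With f⋆ as in the explicit solution of the boundary value problem f'' = γ²f - αγ, f(0) = x, f(T) = a, the path f⋆ admits the decomposition f⋆(t) = x(t) + (a - x(T))·q(t), where x(t) = α/γ + (x - α/γ)e^{-γt} and q(t) = sinh(γt)/sinh(γT). -/

import Mathlib

noncomputable def bvpC (α γ T x a : ℝ) : ℝ :=
  (a - α / γ + (α / γ) * Real.exp (γ * T) - x * Real.exp (-γ * T)) /
    (Real.exp (γ * T) - Real.exp (-γ * T))

noncomputable def fstar (α γ T x a : ℝ) (t : ℝ) : ℝ :=
  (bvpC α γ T x a - α / γ) * Real.exp (γ * t) +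
    (x - bvpC α γ T x a) * Real.exp (-γ * t) + α / γ

/-- zeroth-order path x(t). -/
noncomputable def xbar (α γ x : ℝ) (t : ℝ) : ℝ :=
  α / γ + (x - α / γ) * Real.exp (-γ * t)

/-- f⋆(t) = x(t) + (a - x(T))·q(t), where q(t) = sinh(γt)/sinh(γT). -/
theorem stmt_8 (α γ T x a : ℝ) (hγ : 0 < γ) (hT : 0 < T) (t : ℝ) :
    fstar α γ T x a t =
      xbar α γ x t + (a - xbar α γ x T) * (Real.sinh (γ * t) / Real.sinh (γ * T)) := by
  have hd : Real.exp (γ * T) - Real.exp (-γ * T) ≠ 0 := by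
    have : Real.exp (-γ * T) < Real.exp (γ * T) := by
      apply Real.exp_lt_exp.2; nlinarith
    linarith
  have hγ' : γ ≠ 0 := ne_of_gt hγ
  have hs : Real.sinh (γ * T) ≠ 0 := by
    rw [Real.sinh_eq]
    intro h
    apply hd
    rw [show -γ * T = -(γ * T) by ring]
    linarith [h]
  unfold fstar bvpC xbar
  rw [Real.sinh_eq, Real.sinh_eq] at *
  rw [show -γ * T = -(γ * T) by ring, show -γ * t = -(γ * t) by ring] at *
  rw [Real.exp_neg (γ * T), Real.exp_neg (γ * t)] at *
  have hA : Real.exp (γ * t) ≠ 0 := Real.exp_ne_zero _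
  have hB : Real.exp (γ * T) ≠ 0 := Real.exp_ne_zero _
  field_simp at hd
  have hd3 : -1 + Real.exp (γ * T) ^ 2 ≠ 0 := by
    intro h; apply hd; rw [show Real.exp (γ * T) ^ 2 - 1 = -1 + Real.exp (γ * T) ^ 2 by ring, h]; simp
  field_simp [hd, hd3]
  have hI : (-1 + Real.exp (γ * T) ^ 2)⁻¹ * (-1 + Real.exp (γ * T) ^ 2) = 1 := inv_mul_cancel₀ hd3
  linear_combination (-α * (1 - Real.exp (γ * t) ^ 2)) * hI
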